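/- Fix a positive integer n, reals 0 < p < q < 1, and k ∈ {0,1,…,n}. If X_p ~ Bin(n,p) and X_q ~ Bin(n,q), then E[X_p | X_p ≥ k] ≤ E[X_q | X_q ≥ k]. -/
import Mathlib


/-- The binomial probability mass function: `P[Bin(n,p) = k]`. -/
noncomputable def binomialPMF (n : ℕ) (p : ℝ) (k : ℕ) : ℝ :=
  (n.choose k : ℝ) * p ^ k * (1 - p) ^ (n - k)

/-- The tail conditional expectation `E[Bin(n,p) | Bin(n,p) ≥ k]`. -/
noncomputable def binomialTCE (n : ℕ) (p : ℝ) (k : ℕ) : ℝ :=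
  (∑ j ∈ Finset.Icc k n, (j : ℝ) * binomialPMF n p j) /
    (∑ j ∈ Finset.Icc k n, binomialPMF n p j)

/-- Weighted Chebyshev-type lemma: if `b/a` is "increasing" on `s` (in cross-ratio form),
then the `b`-weighted mean of the identity dominates the `a`-weighted one. -/
lemma tce_key (s : Finset ℕ) (a b : ℕ → ℝ)
    (h : ∀ i ∈ s, ∀ j ∈ s, i ≤ j → a j * b i ≤ a i * b j) :
    (∑ i ∈ s, (i : ℝ) * a i) * (∑ j ∈ s, b j) ≤
      (∑ i ∈ s, (i : ℝ) * b i) * (∑ j ∈ s, a j) := by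
  have hS : 0 ≤ ∑ i ∈ s, ∑ j ∈ s, ((i : ℝ) - j) * (b i * a j - a i * b j) := by
    apply Finset.sum_nonneg
    intro i hi
    apply Finset.sum_nonneg
    intro j hj
    rcases le_total i j with hij | hij
    · have h1 : (i : ℝ) - j ≤ 0 := by
        have := (Nat.cast_le (α := ℝ)).2 hij; linarith
      have h2 : b i * a j - a i * b j ≤ 0 := by
        have := h i hi j hj hij; nlinarith [h i hi j hj hij]
      nlinarith
    · have h1 : 0 ≤ (i : ℝ) - j := by
        have := (Nat.cast_le (α := ℝ)).2 hij; linarith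
      have h2 : 0 ≤ b i * a j - a i * b j := by
        have := h j hj i hi hij; nlinarith [h j hj i hi hij]
      nlinarith
  -- A = RHS - LHS as a double sum
  have hA : (∑ i ∈ s, (i : ℝ) * b i) * (∑ j ∈ s, a j)
      - (∑ i ∈ s, (i : ℝ) * a i) * (∑ j ∈ s, b j)
      = ∑ i ∈ s, ∑ j ∈ s, (i : ℝ) * (b i * a j - a i * b j) := by
    rw [Finset.sum_mul_sum, Finset.sum_mul_sum, ← Finset.sum_sub_distrib]
    apply Finset.sum_congr rfl
    intro i _
    rw [← Finset.sum_sub_distrib]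
    apply Finset.sum_congr rfl
    intro j _
    ring
  have hswap : ∑ i ∈ s, ∑ j ∈ s, (j : ℝ) * (b i * a j - a i * b j)
      = - ∑ i ∈ s, ∑ j ∈ s, (i : ℝ) * (b i * a j - a i * b j) := by
    rw [Finset.sum_comm, ← Finset.sum_neg_distrib]
    apply Finset.sum_congr rfl
    intro i _
    rw [← Finset.sum_neg_distrib]
    apply Finset.sum_congr rfl
    intro j _
    ring
  have hsplit : (∑ i ∈ s, ∑ j ∈ s, ((i : ℝ) - j) * (b i * a j - a i * b j))
      = (∑ i ∈ s, ∑ j ∈ s, (i : ℝ) * (b i * a j - a i * b j))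
        - (∑ i ∈ s, ∑ j ∈ s, (j : ℝ) * (b i * a j - a i * b j)) := by
    rw [← Finset.sum_sub_distrib]
    apply Finset.sum_congr rfl
    intro i _
    rw [← Finset.sum_sub_distrib]
    apply Finset.sum_congr rfl
    intro j _
    ring
  rw [hsplit, hswap] at hS
  linarith [hS, hA.symm.le, hA.le]

/-- The key likelihood-ratio cross inequality for binomial PMFs. -/
lemma binomialPMF_ratio (n i j : ℕ) (p q : ℝ) (hp : 0 < p) (hpq : p < q) (hq : q < 1)
    (hij : i ≤ j) (hjn : j ≤ n) :
    binomialPMF n p j * binomialPMF n q i ≤ binomialPMF n p i * binomialPMF n q j := by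
  have hq0 : 0 < q := lt_trans hp hpq
  have hp1 : p < 1 := lt_trans hpq hq
  set d := j - i with hd
  have hj' : j = i + d := by omega
  have hn' : n - i = (n - j) + d := by omega
  have e1 : p ^ j = p ^ i * p ^ d := by rw [hj', pow_add]
  have e2 : (1 - p) ^ (n - i) = (1 - p) ^ (n - j) * (1 - p) ^ d := by rw [hn', pow_add]
  have e3 : q ^ j = q ^ i * q ^ d := by rw [hj', pow_add]
  have e4 : (1 - q) ^ (n - i) = (1 - q) ^ (n - j) * (1 - q) ^ d := by rw [hn', pow_add]
  have key : (p * (1 - q)) ^ d ≤ (q * (1 - p)) ^ d := by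
    apply pow_le_pow_left₀ (by nlinarith)
    nlinarith
  have hM : 0 ≤ (n.choose j : ℝ) * (n.choose i : ℝ) *
      (p ^ i * q ^ i * (1 - p) ^ (n - j) * (1 - q) ^ (n - j)) := by
    have h1p : (0:ℝ) ≤ 1 - p := by linarith
    have h1q : (0:ℝ) ≤ 1 - q := by linarith
    apply mul_nonneg (mul_nonneg (by positivity) (by positivity))
    exact mul_nonneg (mul_nonneg (mul_nonneg (by positivity) (by positivity))
      (pow_nonneg h1p _)) (pow_nonneg h1q _)
  unfold binomialPMF
  calc (n.choose j : ℝ) * p ^ j * (1 - p) ^ (n - j) *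
        ((n.choose i : ℝ) * q ^ i * (1 - q) ^ (n - i))
      = ((n.choose j : ℝ) * (n.choose i : ℝ) *
          (p ^ i * q ^ i * (1 - p) ^ (n - j) * (1 - q) ^ (n - j))) * (p * (1 - q)) ^ d := by
        rw [e1, e4, mul_pow]; ring
    _ ≤ ((n.choose j : ℝ) * (n.choose i : ℝ) *
          (p ^ i * q ^ i * (1 - p) ^ (n - j) * (1 - q) ^ (n - j))) * (q * (1 - p)) ^ d := by
        exact mul_le_mul_of_nonneg_left key hM
    _ = (n.choose i : ℝ) * p ^ i * (1 - p) ^ (n - i) *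
        ((n.choose j : ℝ) * q ^ j * (1 - q) ^ (n - j)) := by
        rw [e2, e3, mul_pow]; ring

lemma binomialPMF_pos (n j : ℕ) (p : ℝ) (hp : 0 < p) (hp1 : p < 1) (hjn : j ≤ n) :
    0 < binomialPMF n p j := by
  unfold binomialPMF
  have : (0 : ℝ) < (n.choose j : ℝ) := by
    exact_mod_cast Nat.choose_pos hjn
  have h1p : (0 : ℝ) < 1 - p := by linarith
  positivity

theorem binomial_tail_cond_exp_monotone
    (n : ℕ) (hn : 0 < n) (p q : ℝ) (hp : 0 < p) (hpq : p < q) (hq : q < 1)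
    (k : ℕ) (hk : k ≤ n) :
    binomialTCE n p k ≤ binomialTCE n q k := by
  have hq0 : 0 < q := lt_trans hp hpq
  have hp1 : p < 1 := lt_trans hpq hq
  have hne : (Finset.Icc k n).Nonempty := ⟨k, by simp [hk]⟩
  have hDp : 0 < ∑ j ∈ Finset.Icc k n, binomialPMF n p j :=
    Finset.sum_pos (fun j hj => binomialPMF_pos n j p hp hp1 (Finset.mem_Icc.1 hj).2) hne
  have hDq : 0 < ∑ j ∈ Finset.Icc k n, binomialPMF n q j :=
    Finset.sum_pos (fun j hj => binomialPMF_pos n j q hq0 hq (Finset.mem_Icc.1 hj).2) hne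
  unfold binomialTCE
  rw [div_le_div_iff₀ hDp hDq]
  exact tce_key (Finset.Icc k n) (binomialPMF n p) (binomialPMF n q)
    (fun i _ j hj hij =>
      binomialPMF_ratio n i j p q hp hpq hq hij (Finset.mem_Icc.1 hj).2)
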